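/- Let R be a commutative local ring, let n ≥ 2, and let h ∈ R[t] be a monic polynomial of degree n. Then the following are equivalent: (1) every matrix φ ∈ M_n(R) with characteristic polynomial equal to h is very clean; (2) there exists a factorization h = h_0 h_1 such that h_0 and h_1 generate the unit ideal of R[t], h_0 is monic with h_0(0) a unit, and h_1 is monic with h_1(1) a unit or h_1(−1) a unit. -/

import Mathlib

/-- An element `a` of a ring is *very clean* if there is an idempotent `e` commuting with `a`
such that `a - e` or `a + e` is a unit. -/
def IsVeryClean {R : Type*} [Ring R] (a : R) : Prop :=
  ∃ e : R, IsIdempotentElem e ∧ a * e = e * a ∧ (IsUnit (a - e) ∨ IsUnit (a + e))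

/-- A ring is *very clean* if every element is very clean. -/
def VeryCleanRing (R : Type*) [Ring R] : Prop :=
  ∀ a : R, IsVeryClean a

/-- An element `a` of a ring is *strongly clean* if there is an idempotent `e` commuting with `a`
such that `a - e` is a unit. -/
def IsStronglyClean {R : Type*} [Ring R] (a : R) : Prop :=
  ∃ e : R, IsIdempotentElem e ∧ a * e = e * a ∧ IsUnit (a - e)

/-- A ring is *strongly clean* if every element is strongly clean. -/
def StronglyCleanRing (R : Type*) [Ring R] : Prop :=
  ∀ a : R, IsStronglyClean a


open Polynomial in
private lemma vc_exists_shift {R : Type*} [CommRing R] (p : R[X]) (ι : R)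
    (hu : IsUnit (p.eval ι)) : ∃ u v : R[X], (X - C ι) * u = p * v - 1 := by
  obtain ⟨g, hg⟩ := X_sub_C_dvd_sub_C_eval (a := ι) (p := p)
  set c : R := ↑hu.unit⁻¹ with hc
  refine ⟨g * C c, C c, ?_⟩
  have h3 : C (p.eval ι) * C c = 1 := by
    rw [← map_mul, hu.mul_val_inv, map_one]
  linear_combination (-(C c)) * hg - h3

open Polynomial in
private lemma vc_isUnit_aeval {R : Type*} [CommRing R] {n : ℕ}
    (φ : Matrix (Fin n) (Fin n) R) {hp : R[X]} (hh : aeval φ hp = 0)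
    {p w s : R[X]} (hid : p * w = 1 + hp * s) : IsUnit (aeval φ p) := by
  have key : ∀ a b : R[X], a * b = 1 + hp * s → aeval φ a * aeval φ b = 1 := by
    intro a b hab
    rw [← map_mul, hab, map_add, map_one, map_mul, hh, zero_mul, add_zero]
  exact ⟨⟨aeval φ p, aeval φ w, key p w hid, key w p (by linear_combination hid)⟩, rfl⟩

open Polynomial in
set_option maxHeartbeats 1600000 in
theorem very_clean_charpoly_criterion (R : Type*) [CommRing R] [IsLocalRing R]
    (n : ℕ) (hn : 2 ≤ n) (h : Polynomial R) (hmonic : h.Monic) (hdeg : h.natDegree = n) :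
    (∀ φ : Matrix (Fin n) (Fin n) R, φ.charpoly = h → IsVeryClean φ) ↔
      ∃ h₀ h₁ : Polynomial R, h = h₀ * h₁ ∧
        Ideal.span {h₀, h₁} = (⊤ : Ideal (Polynomial R)) ∧
        h₀.Monic ∧ IsUnit (h₀.eval 0) ∧
        h₁.Monic ∧ (IsUnit (h₁.eval 1) ∨ IsUnit (h₁.eval (-1))) := by
  constructor
  · intro hVC
    classical
    set θ : AdjoinRoot h := AdjoinRoot.root h with hθ
    set pb : PowerBasis R (AdjoinRoot h) := AdjoinRoot.powerBasis' hmonic with hpb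
    have hdim : pb.dim = n := by
      rw [hpb, AdjoinRoot.powerBasis'_dim, hdeg]
    set b : Module.Basis (Fin n) R (AdjoinRoot h) := pb.basis.reindex (finCongr hdim) with hbdef
    have hgen : pb.gen = θ := by rw [hpb, AdjoinRoot.powerBasis'_gen, hθ]
    have hbpow : ∀ i : Fin n, b i = θ ^ (i : ℕ) := by
      intro i
      rw [hbdef, Module.Basis.reindex_apply, PowerBasis.coe_basis, hgen]
      congr 1
    haveI : Module.Free R (AdjoinRoot h) := Module.Free.of_basis b
    haveI : Module.Finite R (AdjoinRoot h) := Module.Finite.of_basis b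
    -- minimal polynomial of θ is h
    have hmin : h = minpoly R θ := by
      apply minpoly.unique' R θ hmonic
      · rw [hθ, AdjoinRoot.aeval_eq, AdjoinRoot.mk_self]
      · intro q hq
        by_cases hq0 : q = 0
        · exact Or.inl hq0
        · refine Or.inr fun haq => ?_
          obtain ⟨k, hk⟩ : h ∣ q := by
            rwa [hθ, AdjoinRoot.aeval_eq, AdjoinRoot.mk_eq_zero] at haq
          have hk0 : k ≠ 0 := by rintro rfl; exact hq0 (by simp [hk])
          have hnd : q.natDegree = h.natDegree + k.natDegree := by
            rw [hk, hmonic.natDegree_mul' hk0]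
          have hlt : q.natDegree < h.natDegree :=
            Polynomial.natDegree_lt_natDegree hq0 hq
          omega
    set L : Module.End R (AdjoinRoot h) := Algebra.lmul R (AdjoinRoot h) θ with hL
    set Φ := LinearMap.toMatrixAlgEquiv b with hΦdef
    have hφc : (Φ L).charpoly = h := by
      have h1 : Φ L = LinearMap.toMatrix b b L := by
        rw [hΦdef, LinearMap.toMatrixAlgEquiv, AlgEquiv.ofLinearEquiv_apply]
      rw [h1, LinearMap.charpoly_toMatrix]
      have h2 : (Algebra.leftMulMatrix pb.basis pb.gen).charpoly = L.charpoly := by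
        rw [Algebra.leftMulMatrix_apply, LinearMap.charpoly_toMatrix, hgen, hL]
      rw [← h2, charpoly_leftMulMatrix, hgen, ← hmin]
    obtain ⟨e, he_idem, he_comm, he_unit⟩ := hVC (Φ L) hφc
    set E : Module.End R (AdjoinRoot h) := Φ.symm e with hEdef
    have hΦE : Φ E = e := Φ.apply_symm_apply e
    have hE_idem : E * E = E := by
      apply Φ.injective
      rw [map_mul, hΦE]
      exact he_idem
    have hE_comm : L * E = E * L := by
      apply Φ.injective
      rw [map_mul, map_mul, hΦE]
      exact he_comm
    have hE_unit : IsUnit (L - E) ∨ IsUnit (L + E) := by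
      rcases he_unit with hu | hu
      · left
        have h1 : Φ.symm (Φ L - e) = L - E := by
          rw [map_sub, AlgEquiv.symm_apply_apply, hEdef]
        exact h1 ▸ hu.map Φ.symm
      · right
        have h1 : Φ.symm (Φ L + e) = L + E := by
          rw [map_add, AlgEquiv.symm_apply_apply, hEdef]
        exact h1 ▸ hu.map Φ.symm
    set ε : AdjoinRoot h := E 1 with hεdef
    have hEθ : ∀ x, E (θ * x) = θ * E x := by
      intro x
      have h1 : (E * L) x = (L * E) x := by rw [← hE_comm]
      simpa [Module.End.mul_apply, hL] using h1
    have hpow : ∀ k : ℕ, E (θ ^ k) = θ ^ k * ε := by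
      intro k
      induction k with
      | zero => simp [hεdef]
      | succ k ih =>
        have hps : θ ^ (k + 1) = θ * θ ^ k := pow_succ' θ k
        rw [hps, hEθ, ih]
        ring
    have hlmul : ∀ x y : AdjoinRoot h, Algebra.lmul R (AdjoinRoot h) x y = x * y :=
      fun x y => rfl
    have hEall : ∀ x, E x = ε * x := by
      have hEq : E = Algebra.lmul R (AdjoinRoot h) ε := by
        apply b.ext
        intro i
        rw [hbpow i, hpow, hlmul]
        ring
      intro x
      rw [hEq, hlmul]
    have hidem : ε * ε = ε := by
      have h1 : (E * E) 1 = E 1 := by rw [hE_idem]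
      rw [Module.End.mul_apply, hEall, hEall] at h1
      calc ε * ε = ε * (ε * 1) := by ring
        _ = ε * 1 := h1
        _ = ε := mul_one ε
    have hunitA : IsUnit (θ - ε) ∨ IsUnit (θ + ε) := by
      rcases hE_unit with hu | hu
      · left
        obtain ⟨u, hu'⟩ := hu
        refine IsUnit.of_mul_eq_one (a := θ - ε) ((↑u⁻¹ : Module.End R (AdjoinRoot h)) 1) ?_
        have h1 : (L - E) ((↑u⁻¹ : Module.End R (AdjoinRoot h)) 1) = 1 := by
          rw [← hu', ← Module.End.mul_apply, u.mul_inv]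
          rfl
        have h2 : (L - E) ((↑u⁻¹ : Module.End R (AdjoinRoot h)) 1)
            = (θ - ε) * ((↑u⁻¹ : Module.End R (AdjoinRoot h)) 1) := by
          rw [LinearMap.sub_apply, hL, hlmul, hEall]
          ring
        exact h2.symm.trans h1
      · right
        obtain ⟨u, hu'⟩ := hu
        refine IsUnit.of_mul_eq_one (a := θ + ε) ((↑u⁻¹ : Module.End R (AdjoinRoot h)) 1) ?_
        have h1 : (L + E) ((↑u⁻¹ : Module.End R (AdjoinRoot h)) 1) = 1 := by
          rw [← hu', ← Module.End.mul_apply, u.mul_inv]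
          rfl
        have h2 : (L + E) ((↑u⁻¹ : Module.End R (AdjoinRoot h)) 1)
            = (θ + ε) * ((↑u⁻¹ : Module.End R (AdjoinRoot h)) 1) := by
          rw [LinearMap.add_apply, hL, hlmul, hEall]
          ring
        exact h2.symm.trans h1
    -- the two submodules
    set Mone : Submodule R (AdjoinRoot h) :=
      LinearMap.range (Algebra.lmul R (AdjoinRoot h) ε) with hMone
    set Mzero : Submodule R (AdjoinRoot h) :=
      LinearMap.range (Algebra.lmul R (AdjoinRoot h) (1 - ε)) with hMzero
    have hM1 : ∀ x ∈ Mone, ε * x = x := by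
      rintro x ⟨y, rfl⟩
      rw [hlmul]
      calc ε * (ε * y) = ε * ε * y := by ring
        _ = ε * y := by rw [hidem]
    have hM0 : ∀ x ∈ Mzero, ε * x = 0 := by
      rintro x ⟨y, rfl⟩
      rw [hlmul]
      linear_combination -y * hidem
    have hmem1 : ε ∈ Mone := ⟨1, by rw [hlmul, mul_one]⟩
    have hmem0 : 1 - ε ∈ Mzero := ⟨1, by rw [hlmul, mul_one]⟩
    have hstab1 : ∀ x ∈ Mone, Algebra.lmul R (AdjoinRoot h) θ x ∈ Mone := by
      rintro x ⟨y, rfl⟩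
      exact ⟨θ * y, by rw [hlmul, hlmul, hlmul]; ring⟩
    have hstab0 : ∀ x ∈ Mzero, Algebra.lmul R (AdjoinRoot h) θ x ∈ Mzero := by
      rintro x ⟨y, rfl⟩
      exact ⟨θ * y, by rw [hlmul, hlmul, hlmul]; ring⟩
    -- instances
    haveI : Module.Projective R ↥Mone := by
      refine Module.Projective.of_split Mone.subtype
        (LinearMap.codRestrict Mone (Algebra.lmul R (AdjoinRoot h) ε)
          (fun c => LinearMap.mem_range_self _ c)) ?_
      ext x
      simp only [LinearMap.coe_comp, Function.comp_apply, Submodule.coe_subtype,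
        LinearMap.codRestrict_apply, LinearMap.id_coe, id_eq, hlmul]
      exact hM1 x.1 x.2
    haveI : Module.Projective R ↥Mzero := by
      refine Module.Projective.of_split Mzero.subtype
        (LinearMap.codRestrict Mzero (Algebra.lmul R (AdjoinRoot h) (1 - ε))
          (fun c => LinearMap.mem_range_self _ c)) ?_
      ext x
      have h0 := hM0 x.1 x.2
      simp only [LinearMap.coe_comp, Function.comp_apply, Submodule.coe_subtype,
        LinearMap.codRestrict_apply, LinearMap.id_coe, id_eq, hlmul]
      linear_combination -h0
    haveI : Module.FinitePresentation R ↥Mone := Module.finitePresentation_of_projective R _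
    haveI : Module.FinitePresentation R ↥Mzero := Module.finitePresentation_of_projective R _
    haveI : Module.Free R ↥Mone := Module.free_of_flat_of_isLocalRing
    haveI : Module.Free R ↥Mzero := Module.free_of_flat_of_isLocalRing
    -- evaluation of polynomials in the restricted multiplication map
    have hTpow : ∀ (N : Submodule R (AdjoinRoot h))
        (hstab : ∀ x ∈ N, Algebra.lmul R (AdjoinRoot h) θ x ∈ N) (k : ℕ) (x : N),
        (((((Algebra.lmul R (AdjoinRoot h) θ).restrict hstab)) ^ k) x : AdjoinRoot h)
          = θ ^ k * (x : AdjoinRoot h) := by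
      intro N hstab k
      induction k with
      | zero => intro x; simp
      | succ k ih =>
        intro x
        rw [pow_succ, Module.End.mul_apply, ih, LinearMap.restrict_coe_apply, hlmul,
          pow_succ']
        ring
    have hkey : ∀ (N : Submodule R (AdjoinRoot h))
        (hstab : ∀ x ∈ N, Algebra.lmul R (AdjoinRoot h) θ x ∈ N) (p : R[X]) (x : N),
        ((aeval ((Algebra.lmul R (AdjoinRoot h) θ).restrict hstab) p x : N) : AdjoinRoot h)
          = AdjoinRoot.mk h p * (x : AdjoinRoot h) := by
      intro N hstab p x
      induction p using Polynomial.induction_on' with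
      | add p q hp hq =>
        rw [map_add, LinearMap.add_apply, Submodule.coe_add, hp, hq, map_add]
        ring
      | monomial k c =>
        rw [aeval_monomial, Module.End.mul_apply, Module.algebraMap_end_apply,
          SetLike.val_smul, hTpow, ← C_mul_X_pow_eq_monomial, map_mul, map_pow,
          AdjoinRoot.mk_X, AdjoinRoot.mk_C, Algebra.smul_def, AdjoinRoot.algebraMap_eq]
        ring
    -- the two characteristic polynomials
    set T1 : Module.End R ↥Mone := (Algebra.lmul R (AdjoinRoot h) θ).restrict hstab1
      with hT1
    set T0 : Module.End R ↥Mzero := (Algebra.lmul R (AdjoinRoot h) θ).restrict hstab0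
      with hT0
    set p1 : R[X] := T1.charpoly with hp1def
    set p0 : R[X] := T0.charpoly with hp0def
    have hm1 : p1.Monic := T1.charpoly_monic
    have hm0 : p0.Monic := T0.charpoly_monic
    have hd1 : p1.natDegree = Module.finrank R ↥Mone := T1.charpoly_natDegree
    have hd0 : p0.natDegree = Module.finrank R ↥Mzero := T0.charpoly_natDegree
    obtain ⟨q, hq⟩ := AdjoinRoot.mk_surjective ε
    have hann1 : h ∣ p1 * q := by
      rw [← AdjoinRoot.mk_eq_zero, map_mul, hq]
      have h1 := hkey Mone hstab1 p1 ⟨ε, hmem1⟩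
      rw [hp1def, LinearMap.aeval_self_charpoly, LinearMap.zero_apply,
        ZeroMemClass.coe_zero] at h1
      exact h1.symm
    have hann0 : h ∣ p0 * (1 - q) := by
      rw [← AdjoinRoot.mk_eq_zero, map_mul, map_sub, map_one, hq]
      have h1 := hkey Mzero hstab0 p0 ⟨1 - ε, hmem0⟩
      rw [hp0def, LinearMap.aeval_self_charpoly, LinearMap.zero_apply,
        ZeroMemClass.coe_zero] at h1
      exact h1.symm
    -- finrank additivity
    have hfr : Module.finrank R ↥Mzero + Module.finrank R ↥Mone = n := by
      have hid1 : ((LinearMap.codRestrict Mzero (Algebra.lmul R (AdjoinRoot h) (1 - ε))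
            (fun c => LinearMap.mem_range_self _ c)).prod
          (LinearMap.codRestrict Mone (Algebra.lmul R (AdjoinRoot h) ε)
            (fun c => LinearMap.mem_range_self _ c))).comp
          (Mzero.subtype.coprod Mone.subtype) = LinearMap.id := by
        apply LinearMap.ext
        rintro ⟨⟨u, hu⟩, ⟨v, hv⟩⟩
        have e0 : ε * u = 0 := hM0 u hu
        have e1 : ε * v = v := hM1 v hv
        refine Prod.ext (Subtype.ext ?_) (Subtype.ext ?_) <;>
          simp only [LinearMap.comp_apply, LinearMap.coprod_apply, Submodule.coe_subtype,
            LinearMap.prod_apply, Function.prod, LinearMap.codRestrict_apply, hlmul,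
            LinearMap.id_coe, id_eq]
        · linear_combination -e0 - e1
        · linear_combination e0 + e1
      have hid2 : (Mzero.subtype.coprod Mone.subtype).comp
          ((LinearMap.codRestrict Mzero (Algebra.lmul R (AdjoinRoot h) (1 - ε))
              (fun c => LinearMap.mem_range_self _ c)).prod
            (LinearMap.codRestrict Mone (Algebra.lmul R (AdjoinRoot h) ε)
              (fun c => LinearMap.mem_range_self _ c))) = LinearMap.id := by
        apply LinearMap.ext
        intro x
        simp only [LinearMap.comp_apply, LinearMap.coprod_apply, Submodule.coe_subtype,
          LinearMap.prod_apply, Function.prod, LinearMap.codRestrict_apply, hlmul,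
          LinearMap.id_coe, id_eq]
        ring
      have hEquiv : Nonempty (AdjoinRoot h ≃ₗ[R] ↥Mzero × ↥Mone) :=
        ⟨LinearEquiv.ofLinear _ _ hid1 hid2⟩
      obtain ⟨g⟩ := hEquiv
      have h1 : Module.finrank R (AdjoinRoot h) = n := by
        rw [Module.finrank_eq_card_basis b, Fintype.card_fin]
      have h2 := g.finrank_eq
      rw [Module.finrank_prod] at h2
      omega
    -- h = p0 * p1
    have hdvdprod : h ∣ p0 * p1 := by
      obtain ⟨c, hc⟩ := hann0
      obtain ⟨d, hd⟩ := hann1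
      exact ⟨p1 * c + p0 * d, by linear_combination p1 * hc + p0 * hd⟩
    have heq : h = p0 * p1 := by
      obtain ⟨u, hu⟩ := hdvdprod
      have hu0 : u ≠ 0 := by
        rintro rfl
        rw [mul_zero] at hu
        exact (hm0.mul hm1).ne_zero hu
      have hndeg : (p0 * p1).natDegree = n := by
        rw [hm0.natDegree_mul hm1, hd0, hd1, hfr]
      have hnd2 : (h * u).natDegree = h.natDegree + u.natDegree :=
        hmonic.natDegree_mul' hu0
      have hu_deg : u.natDegree = 0 := by
        rw [← hu] at hnd2
        omega
      have hulc : u.leadingCoeff = 1 := by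
        have h3 : (u * h).leadingCoeff = u.leadingCoeff :=
          Polynomial.leadingCoeff_mul_monic hmonic
        rw [mul_comm u h, ← hu] at h3
        rw [← h3]
        exact hm0.mul hm1
      have : u = 1 := by
        have h4 := Polynomial.eq_C_of_natDegree_eq_zero hu_deg
        rw [h4]
        rw [Polynomial.leadingCoeff, hu_deg] at hulc
        rw [hulc, map_one]
      rw [hu, this, mul_one]
    -- comaximality
    obtain ⟨c, hc⟩ := hann0
    obtain ⟨d, hd⟩ := hann1
    have h1c : 1 - q = p1 * c := by
      apply hm0.isRegular.left
      show p0 * (1 - q) = p0 * (p1 * c)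
      rw [hc, heq]
      ring
    have hqd : q = p0 * d := by
      apply hm1.isRegular.left
      show p1 * q = p1 * (p0 * d)
      rw [hd, heq]
      ring
    have hspan : Ideal.span {p0, p1} = (⊤ : Ideal R[X]) := by
      rw [Ideal.eq_top_iff_one]
      exact Ideal.mem_span_pair.mpr ⟨d, c, by linear_combination -hqd - h1c⟩
    -- conclusion: extract the unit conditions
    rcases hunitA with hu | hu
    · obtain ⟨ρ, hρ⟩ := hu.exists_right_inv
      obtain ⟨r, hr⟩ := AdjoinRoot.mk_surjective ρ
      obtain ⟨s, hs⟩ : h ∣ (X - q) * r - 1 := by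
        rw [← AdjoinRoot.mk_eq_zero, map_sub, map_mul, map_sub, AdjoinRoot.mk_X, hq, hr,
          map_one, hρ, sub_self]
      rw [heq] at hs
      have e2 := congrArg (Polynomial.eval 0) hqd
      have e2' := congrArg (Polynomial.eval 1) h1c
      have e1 := congrArg (Polynomial.eval 0) hs
      have e1' := congrArg (Polynomial.eval 1) hs
      simp only [eval_sub, eval_mul, eval_one, eval_X] at e1 e1' e2 e2'
      have hu0 : IsUnit (p0.eval 0) :=
        IsUnit.of_mul_eq_one (-(d.eval 0 * r.eval 0) - p1.eval 0 * s.eval 0)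
          (by linear_combination e1 + (r.eval 0) * e2)
      have hu1 : IsUnit (p1.eval 1) :=
        IsUnit.of_mul_eq_one (c.eval 1 * r.eval 1 - p0.eval 1 * s.eval 1)
          (by linear_combination e1' - (r.eval 1) * e2')
      exact ⟨p0, p1, heq, hspan, hm0, hu0, hm1, Or.inl hu1⟩
    · obtain ⟨ρ, hρ⟩ := hu.exists_right_inv
      obtain ⟨r, hr⟩ := AdjoinRoot.mk_surjective ρ
      obtain ⟨s, hs⟩ : h ∣ (X + q) * r - 1 := by
        rw [← AdjoinRoot.mk_eq_zero, map_sub, map_mul, map_add, AdjoinRoot.mk_X, hq, hr,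
          map_one, hρ, sub_self]
      rw [heq] at hs
      have e2 := congrArg (Polynomial.eval 0) hqd
      have e2' := congrArg (Polynomial.eval (-1)) h1c
      have e1 := congrArg (Polynomial.eval 0) hs
      have e1' := congrArg (Polynomial.eval (-1)) hs
      simp only [eval_sub, eval_mul, eval_one, eval_add, eval_X] at e1 e1' e2 e2'
      have hu0 : IsUnit (p0.eval 0) :=
        IsUnit.of_mul_eq_one (d.eval 0 * r.eval 0 - p1.eval 0 * s.eval 0)
          (by linear_combination e1 - (r.eval 0) * e2)
      have hu1 : IsUnit (p1.eval (-1)) :=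
        IsUnit.of_mul_eq_one (-(c.eval (-1) * r.eval (-1)) - p0.eval (-1) * s.eval (-1))
          (by linear_combination e1' + (r.eval (-1)) * e2')
      exact ⟨p0, p1, heq, hspan, hm0, hu0, hm1, Or.inr hu1⟩
  · rintro ⟨h₀, h₁, heq, hspan, hm0, hu0, hm1, hu1⟩ φ hφ
    obtain ⟨a, b, hab⟩ := Ideal.mem_span_pair.mp
      (hspan ▸ Submodule.mem_top : (1 : R[X]) ∈ Ideal.span {h₀, h₁})
    have hCH : aeval φ (h₀ * h₁) = 0 := by
      rw [← heq, ← hφ]; exact Matrix.aeval_self_charpoly φ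
    obtain ⟨u₀, v₀, e0'⟩ := vc_exists_shift h₀ 0 hu0
    have e0 : X * u₀ = h₀ * v₀ - 1 := by simpa using e0'
    refine ⟨aeval φ (a * h₀), ?_, ?_, ?_⟩
    · show _ * _ = _
      have hz : aeval φ (h₀ * h₁ * (-(a * b))) = 0 := by rw [map_mul, hCH, zero_mul]
      rw [← map_mul,
        show a * h₀ * (a * h₀) = a * h₀ + h₀ * h₁ * (-(a * b)) by
          linear_combination (a * h₀) * hab,
        map_add, hz, add_zero]
    · have h1 : aeval φ (X * (a * h₀)) = φ * aeval φ (a * h₀) := by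
        rw [map_mul, aeval_X]
      have h2 : aeval φ (a * h₀ * X) = aeval φ (a * h₀) * φ := by
        rw [map_mul, aeval_X]
      rw [← h1, ← h2, mul_comm]
    · rcases hu1 with hu1 | hu1
      · left
        obtain ⟨u₁, v₁, e1'⟩ := vc_exists_shift h₁ 1 hu1
        have e1 : (X - 1) * u₁ = h₁ * v₁ - 1 := by simpa using e1'
        have hsub : φ - aeval φ (a * h₀) = aeval φ (X - a * h₀) := by
          rw [map_sub, aeval_X]
        rw [hsub]
        refine vc_isUnit_aeval φ hCH (w := -(u₀ * b * h₁ + u₁ * a * h₀))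
          (s := a * u₀ * b - b * v₀ - a * v₁ - a * b * u₁) ?_
        linear_combination (-(b * h₁)) * e0 + (-(a * h₀)) * e1 + (u₁ * a * h₀ + 1) * hab
      · right
        obtain ⟨u₁, v₁, e1'⟩ := vc_exists_shift h₁ (-1) hu1
        have e1 : (X + 1) * u₁ = h₁ * v₁ - 1 := by
          have hX : (X - C (-1 : R)) = X + 1 := by simp
          rwa [hX] at e1'
        have hadd : φ + aeval φ (a * h₀) = aeval φ (X + a * h₀) := by
          rw [map_add, aeval_X]
        rw [hadd]
        refine vc_isUnit_aeval φ hCH (w := -(u₀ * b * h₁ + u₁ * a * h₀))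
          (s := a * b * u₁ - a * v₁ - b * v₀ - a * u₀ * b) ?_
        linear_combination (-(b * h₁)) * e0 + (-(a * h₀)) * e1 + (1 - u₁ * a * h₀) * hab
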